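/- Let n points be drawn i.i.d. uniformly from [0,1]^K with K ≥ 1 fixed, let δ ∈ (0,1], fix k ∈ {1,…,K}, and let R̃^k(δ) = {x ∈ [0,1]^K : x^{k'} ≤ δ for all k' ≠ k}. Let Ṽ^k(δ) be the maximum difference between consecutive values in {x^k : x ∈ R̃^k(δ) among the drawn points} ∪ {0,1}. Then there is a function f(n) = O(log n / n) such that with probability at least 1 − 1/n (for n large enough), Ṽ^k(δ) ≤ f(n)/δ^{K−1}. -/

import Mathlib

open MeasureTheory

set_option maxHeartbeats 1000000

open scoped ENNReal

lemma vol_pi_const {α : Type*} [MeasureSpace α] [SigmaFinite (volume : Measure α)]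
    (n : ℕ) (D : Set α) :
    volume {x : Fin n → α | ∀ i, x i ∈ D} = volume D ^ n := by
  have : {x : Fin n → α | ∀ i, x i ∈ D} = Set.pi Set.univ (fun _ => D) := by
    ext x; simp [Set.mem_pi]
  rw [this, volume_pi_pi]
  simp

lemma vol_box (K : ℕ) (k : Fin K) (a b δ : ℝ) :
    volume (Set.pi Set.univ fun k' : Fin K =>
      if k' = k then Set.Icc a b else Set.Icc 0 δ)
      = ENNReal.ofReal (b - a) * ENNReal.ofReal δ ^ (K - 1) := by
  rw [volume_pi_pi, ← Finset.mul_prod_erase Finset.univ _ (Finset.mem_univ k)]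
  rw [if_pos rfl, Real.volume_Icc]
  congr 1
  rw [Finset.prod_congr rfl (fun x hx => ?_), Finset.prod_const,
    Finset.card_erase_of_mem (Finset.mem_univ k), Finset.card_univ, Fintype.card_fin]
  rw [if_neg (Finset.mem_erase.mp hx).1, Real.volume_Icc, sub_zero]

lemma vol_cubeK (K : ℕ) :
    volume (Set.pi Set.univ fun _ : Fin K => Set.Icc (0:ℝ) 1) = 1 := by
  rw [volume_pi_pi]
  simp


/-- Maximum spacing in the box `R̃^k(δ)`: for `n` i.i.d. uniform points in `[0,1]^K`
there is `f(n) = O(log n / n)` such that with probability at least `1 − 1/n` (for `n`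
large), the maximum gap between consecutive values of the `k`-th coordinates of points
falling in `R̃^k(δ) = {x : x^{k'} ≤ δ ∀ k' ≠ k}`, together with `{0,1}`, is at most
`f(n)/δ^{K−1}`.  The gap bound is expressed via the equivalent interval condition. -/
theorem stmt19 (K : ℕ) (hK : 1 ≤ K) (k : Fin K) :
    ∃ f : ℕ → ℝ, (∃ C : ℝ, ∀ n : ℕ, 2 ≤ n → f n ≤ C * Real.log n / n) ∧
      ∃ N : ℕ, ∀ n : ℕ, N ≤ n → ∀ δ : ℝ, 0 < δ → δ ≤ 1 →
        ENNReal.ofReal (1 - 1 / (n : ℝ)) ≤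
        volume {x : Fin n → Fin K → ℝ |
          (∀ i k', x i k' ∈ Set.Icc (0:ℝ) 1) ∧
          ∀ a b : ℝ, 0 ≤ a → b ≤ 1 → f n / δ ^ (K - 1) < b - a →
            ∃ s : ℝ, (s = 0 ∨ s = 1 ∨ ∃ i, (∀ k', k' ≠ k → x i k' ≤ δ) ∧ s = x i k) ∧
              a < s ∧ s < b} := by
  refine ⟨fun n => 6 * Real.log n / n, ⟨6, fun n _ => le_rfl⟩, 3, ?_⟩
  intro n hn δ hδ0 hδ1
  have hn0 : (0:ℝ) < n := by exact_mod_cast lt_of_lt_of_le (by norm_num) hn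
  have hn3 : (3:ℝ) ≤ n := by exact_mod_cast hn
  have hlog1 : 1 ≤ Real.log n := by
    rw [Real.le_log_iff_exp_le hn0]
    calc Real.exp 1 ≤ 3 := by
          have := Real.exp_one_lt_d9; linarith
      _ ≤ n := hn3
  have hlog0 : 0 < Real.log n := lt_of_lt_of_le one_pos hlog1
  set fn : ℝ := 6 * Real.log n / n with hfn
  have hfn0 : 0 < fn := by positivity
  have hδK0 : 0 < δ ^ (K - 1) := by positivity
  have hδK1 : δ ^ (K - 1) ≤ 1 := pow_le_one₀ hδ0.le hδ1
  set G : ℝ := fn / δ ^ (K - 1) with hGdef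
  have hG0 : 0 < G := by positivity
  set E := {x : Fin n → Fin K → ℝ |
          (∀ i k', x i k' ∈ Set.Icc (0:ℝ) 1) ∧
          ∀ a b : ℝ, 0 ≤ a → b ≤ 1 → G < b - a →
            ∃ s : ℝ, (s = 0 ∨ s = 1 ∨ ∃ i, (∀ k', k' ≠ k → x i k' ≤ δ) ∧ s = x i k) ∧
              a < s ∧ s < b} with hE
  clear_value E
  show ENNReal.ofReal (1 - 1 / (n : ℝ)) ≤ volume E
  set cube := {x : Fin n → Fin K → ℝ | ∀ i k', x i k' ∈ Set.Icc (0:ℝ) 1} with hcubedef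
  clear_value cube
  have hcube : volume cube = 1 := by
    have h1 : cube = {x : Fin n → Fin K → ℝ |
        ∀ i, x i ∈ Set.pi Set.univ fun _ : Fin K => Set.Icc (0:ℝ) 1} := by
      ext x; simp only [hcubedef, Set.mem_setOf_eq, Set.mem_pi, Set.mem_univ,
        forall_true_left, true_implies]
    rw [h1, vol_pi_const, vol_cubeK, one_pow]
  by_cases hG1 : 1 ≤ G
  · have hsub : cube ⊆ E := by
      intro x hx
      simp only [hcubedef, Set.mem_setOf_eq] at hx
      simp only [hE, Set.mem_setOf_eq]
      refine ⟨hx, fun a b ha hb hab => absurd hab (not_lt.mpr ?_)⟩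
      linarith
    calc ENNReal.ofReal (1 - 1 / (n : ℝ)) ≤ 1 := ENNReal.ofReal_le_one.mpr (by
          have : 0 ≤ 1 / (n:ℝ) := by positivity
          linarith)
      _ = volume cube := hcube.symm
      _ ≤ volume E := measure_mono hsub
  · push_neg at hG1
    set m : ℕ := ⌈2 / G⌉₊ with hm
    have h2G : (2:ℝ)/G ≤ m := Nat.le_ceil _
    have h2G2 : (2:ℝ) < 2 / G := by
      rw [lt_div_iff₀ hG0]; nlinarith
    have hm0' : (0:ℝ) < m := lt_of_lt_of_le (by linarith) h2G
    have hm0 : 0 < m := by exact_mod_cast hm0'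
    have hm3G : (m:ℝ) ≤ 3 / G := by
      have hc := Nat.ceil_lt_add_one (le_of_lt (by positivity : (0:ℝ) < 2/G))
      have h1G : 1 ≤ 1/G := by rw [le_div_iff₀ hG0]; linarith
      have : (m:ℝ) < 2/G + 1 := hc
      have h3 : 2/G + 1/G = 3/G := by ring
      linarith
    clear_value m
    have hmn : (m:ℝ) ≤ n := by
      have h1 : 3/G = 3 * δ^(K-1) / fn := by
        rw [hGdef, div_div_eq_mul_div]
      have h2 : 3 * δ^(K-1) / fn ≤ 3 / fn := by
        gcongr
        nlinarith
      have h3 : 3 / fn ≤ (n:ℝ) := by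
        rw [div_le_iff₀ hfn0]
        have hnfn : (n:ℝ) * fn = 6 * Real.log n := by
          rw [hfn]; field_simp
        nlinarith
      linarith
    -- the grid boxes
    have hSE : ∀ x ∈ cube, (∀ j ∈ Finset.range m, ∃ i : Fin n,
        (∀ k', k' ≠ k → x i k' ≤ δ) ∧ x i k ∈ Set.Icc ((j:ℝ)/m) (((j:ℝ)+1)/m)) → x ∈ E := by
      intro x hx1 hx2
      simp only [hcubedef, Set.mem_setOf_eq] at hx1
      simp only [hE, Set.mem_setOf_eq]
      refine ⟨hx1, fun a b ha hb hab => ?_⟩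
      set j : ℕ := ⌊a * m⌋₊ + 1 with hj
      have ham0 : 0 ≤ a * m := by positivity
      have hj1 : (j:ℝ) ≤ a * m + 1 := by
        have := Nat.floor_le ham0
        push_cast [hj]; linarith
      have hj2 : a * m < j := by
        have := Nat.lt_floor_add_one (a * m)
        push_cast [hj]; linarith
      have h2mG : 2 / (m:ℝ) ≤ G := by
        rw [div_le_iff₀ hm0']
        have := (div_le_iff₀ hG0).mp h2G
        linarith
      have hjb : ((j:ℝ)+1)/m < b := by
        have h4 : ((j:ℝ)+1)/m ≤ a + 2/m := by
          rw [div_le_iff₀ hm0']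
          have h5 : (a + 2/(m:ℝ)) * m = a*m + 2 := by field_simp
          rw [h5]; linarith
        linarith
      have hjm : j < m := by
        have hb1 : ((j:ℝ)+1)/m < 1 := lt_of_lt_of_le hjb hb
        rw [div_lt_one hm0'] at hb1
        exact_mod_cast (by linarith : (j:ℝ) < m)
      obtain ⟨i, hi1, hi2⟩ := hx2 j (Finset.mem_range.mpr hjm)
      refine ⟨x i k, Or.inr (Or.inr ⟨i, hi1, rfl⟩), ?_, lt_of_le_of_lt hi2.2 hjb⟩
      have : a < (j:ℝ)/m := by rw [lt_div_iff₀ hm0']; linarith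
      exact lt_of_lt_of_le this hi2.1
    -- union bound
    set A : ℕ → Set (Fin n → Fin K → ℝ) := fun j => {x | ∃ i : Fin n,
        (∀ k', k' ≠ k → x i k' ≤ δ) ∧ x i k ∈ Set.Icc ((j:ℝ)/m) (((j:ℝ)+1)/m)} with hA
    clear_value A
    have key : ∀ j < m, volume (cube ∩ (A j)ᶜ) ≤ ENNReal.ofReal (1/(n:ℝ)^2) := by
      intro j hjm
      set p : ℝ := (1/(m:ℝ)) * δ^(K-1) with hp
      have hp0 : 0 < p := by positivity
      have hp1 : p ≤ 1 := by
        have h1m : 1/(m:ℝ) ≤ 1 := by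
          rw [div_le_one hm0']; exact_mod_cast hm0
        have h2 : p ≤ 1 * 1 := mul_le_mul h1m hδK1 hδK0.le one_pos.le
        linarith
      have hplb : 2 * Real.log n / n ≤ p := by
        have h1m : G/3 ≤ 1/(m:ℝ) := by
          rw [div_le_div_iff₀ (by norm_num) hm0']
          have := (le_div_iff₀ hG0).mp hm3G
          linarith
        have h6 : G/3 * δ^(K-1) ≤ p := mul_le_mul_of_nonneg_right h1m hδK0.le
        have hfneq : G * δ^(K-1) = fn := by
          rw [hGdef]; field_simp
        have h7 : 2*Real.log n / n = fn/3 := by rw [hfn]; ring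
        linarith [h6, hfneq, h7]
      clear_value p
      set D : Set (Fin K → ℝ) := (Set.pi Set.univ fun _ : Fin K => Set.Icc (0:ℝ) 1) \
          (Set.pi Set.univ fun k' : Fin K =>
            if k' = k then Set.Icc ((j:ℝ)/m) (((j:ℝ)+1)/m) else Set.Icc 0 δ) with hD
      have hsub : cube ∩ (A j)ᶜ ⊆ {x : Fin n → Fin K → ℝ | ∀ i, x i ∈ D} := by
        rintro x ⟨hx1, hx2⟩ i
        rw [hcubedef] at hx1
        rw [hA] at hx2
        rw [hD]
        constructor
        · intro k' _; exact hx1 i k'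
        · intro hmem
          apply hx2
          refine ⟨i, fun k' hk' => ?_, ?_⟩
          · have := hmem k' (Set.mem_univ k')
            simp only [if_neg hk'] at this; exact this.2
          · have := hmem k (Set.mem_univ k)
            simp only [if_pos rfl] at this; exact this
      have hboxsub : (Set.pi Set.univ fun k' : Fin K =>
            if k' = k then Set.Icc ((j:ℝ)/m) (((j:ℝ)+1)/m) else Set.Icc 0 δ) ⊆
          (Set.pi Set.univ fun _ : Fin K => Set.Icc (0:ℝ) 1) := by
        intro y hy k' _
        have := hy k' (Set.mem_univ k')
        show y k' ∈ Set.Icc (0:ℝ) 1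
        by_cases hk' : k' = k
        · simp only [if_pos hk'] at this
          have hjm' : (j:ℝ) + 1 ≤ m := by exact_mod_cast hjm
          constructor
          · exact le_trans (by positivity) this.1
          · exact le_trans this.2 (by rw [div_le_one hm0']; linarith)
        · simp only [if_neg hk'] at this
          exact ⟨this.1, le_trans this.2 hδ1⟩
      have hmeas : MeasurableSet (Set.pi Set.univ fun k' : Fin K =>
          if k' = k then Set.Icc ((j:ℝ)/m) (((j:ℝ)+1)/m) else Set.Icc 0 δ) := by
        apply MeasurableSet.univ_pi
        intro k'
        by_cases hk' : k' = k
        · rw [if_pos hk']; exact measurableSet_Icc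
        · rw [if_neg hk']; exact measurableSet_Icc
      have hfin : volume (Set.pi Set.univ fun k' : Fin K =>
          if k' = k then Set.Icc ((j:ℝ)/m) (((j:ℝ)+1)/m) else Set.Icc 0 δ) ≠ ⊤ := by
        rw [vol_box]
        exact ENNReal.mul_ne_top ENNReal.ofReal_ne_top (ENNReal.pow_ne_top ENNReal.ofReal_ne_top)
      have hDvol : volume D = ENNReal.ofReal (1 - p) := by
        rw [hD, measure_diff hboxsub hmeas.nullMeasurableSet hfin, vol_cubeK, vol_box]
        have h1m : ((j:ℝ)+1)/m - (j:ℝ)/m = 1/m := by field_simp; ring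
        rw [h1m, ← ENNReal.ofReal_pow hδ0.le, ← ENNReal.ofReal_mul (by positivity),
          ← hp, ← ENNReal.ofReal_one, ← ENNReal.ofReal_sub _ hp0.le]
      have hreal : (1-p)^n ≤ 1/(n:ℝ)^2 := by
        have e1 : (1-p)^n ≤ Real.exp (-p) ^ n :=
          pow_le_pow_left₀ (by linarith) (by nlinarith [Real.add_one_le_exp (-p)]) n
        have e2 : Real.exp (-p) ^ n = Real.exp ((n:ℝ) * (-p)) := (Real.exp_nat_mul _ n).symm
        have e3 : Real.exp ((n:ℝ) * (-p)) ≤ Real.exp (-(2*Real.log n)) := by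
          apply Real.exp_le_exp.mpr
          have h8 : 2 * Real.log n ≤ (n:ℝ) * p := by
            rw [div_le_iff₀ hn0] at hplb; linarith
          linarith
        have e4 : Real.exp (-(2*Real.log n)) = 1/(n:ℝ)^2 := by
          rw [Real.exp_neg, show (2:ℝ)*Real.log n = Real.log n + Real.log n by ring,
            Real.exp_add, Real.exp_log hn0]
          field_simp
        calc (1-p)^n ≤ Real.exp (-p) ^ n := e1
          _ = Real.exp ((n:ℝ) * (-p)) := e2
          _ ≤ Real.exp (-(2*Real.log n)) := e3
          _ = 1/(n:ℝ)^2 := e4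
      calc volume (cube ∩ (A j)ᶜ) ≤ volume {x : Fin n → Fin K → ℝ | ∀ i, x i ∈ D} :=
            measure_mono hsub
        _ = volume D ^ n := vol_pi_const n D
        _ = ENNReal.ofReal ((1-p)^n) := by
            rw [hDvol, ← ENNReal.ofReal_pow (by linarith)]
        _ ≤ ENNReal.ofReal (1/(n:ℝ)^2) := ENNReal.ofReal_le_ofReal hreal
    set S := cube ∩ ⋂ j ∈ Finset.range m, A j with hS
    clear_value S
    have hdiff : volume (cube \ S) ≤ ENNReal.ofReal (1/(n:ℝ)) := by
      have hsub : cube \ S ⊆ ⋃ j ∈ Finset.range m, (cube ∩ (A j)ᶜ) := by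
        rintro x ⟨hx1, hx2⟩
        rw [hS] at hx2
        have : ¬ x ∈ ⋂ j ∈ Finset.range m, A j := fun h => hx2 ⟨hx1, h⟩
        rw [Set.mem_iInter₂] at this
        push_neg at this
        obtain ⟨j, hj, hjA⟩ := this
        exact Set.mem_biUnion hj ⟨hx1, hjA⟩
      calc volume (cube \ S) ≤ ∑ j ∈ Finset.range m, volume (cube ∩ (A j)ᶜ) :=
            le_trans (measure_mono hsub) (measure_biUnion_finset_le _ _)
        _ ≤ ∑ j ∈ Finset.range m, ENNReal.ofReal (1/(n:ℝ)^2) :=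
            Finset.sum_le_sum (fun j hj => key j (Finset.mem_range.mp hj))
        _ = m * ENNReal.ofReal (1/(n:ℝ)^2) := by
            rw [Finset.sum_const, Finset.card_range, nsmul_eq_mul]
        _ ≤ ENNReal.ofReal (1/(n:ℝ)) := by
            rw [← ENNReal.ofReal_natCast m, ← ENNReal.ofReal_mul (by positivity)]
            apply ENNReal.ofReal_le_ofReal
            rw [show (m:ℝ) * (1/(n:ℝ)^2) = (m:ℝ)/(n:ℝ)^2 by ring,
              div_le_div_iff₀ (by positivity) hn0]
            nlinarith
    have hfinal : ENNReal.ofReal (1 - 1/(n:ℝ)) ≤ volume S := by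
      have h1 : (1:ℝ≥0∞) ≤ volume S + ENNReal.ofReal (1/(n:ℝ)) := by
        calc (1:ℝ≥0∞) = volume cube := hcube.symm
          _ ≤ volume (S ∪ (cube \ S)) := measure_mono (fun x hx =>
              (em (x ∈ S)).imp id (fun h => ⟨hx, h⟩))
          _ ≤ volume S + volume (cube \ S) := measure_union_le _ _
          _ ≤ volume S + ENNReal.ofReal (1/(n:ℝ)) := add_le_add le_rfl hdiff
      rw [show ENNReal.ofReal (1 - 1/(n:ℝ)) = 1 - ENNReal.ofReal (1/(n:ℝ)) by
        rw [← ENNReal.ofReal_one, ← ENNReal.ofReal_sub _ (by positivity)]]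
      exact tsub_le_iff_right.mpr h1
    refine le_trans hfinal (measure_mono ?_)
    rw [hS]
    rintro x ⟨hx1, hx2⟩
    refine hSE x hx1 (fun j hj => ?_)
    rw [Set.mem_iInter₂] at hx2
    have := hx2 j hj
    rw [hA] at this
    exact this
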